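/- Let k > 0 and let L = L_1 ∪ ⋯ ∪ L_l, where each L_p is a k-TSS language over the finite alphabet Σ, and let w_1, w_2, w_3, … be an enumeration of L (a function from the positive integers onto L). Setting K_i = ⋃_{j=1}^{i} γ_k(α_k({w_j})), we have K_i ⊆ L for all i, and there exists n such that for all m ≥ n, K_m = L. Hence any finite union of k-TSS languages is identified in the limit from positive examples. -/
import Mathlib


open Set
open scoped symmDiff

/-- A candidate `k`-test vector: a 4-tuple of sets of strings
(`I` prefixes, `F` suffixes, `T` segments, `C` short strings). -/
structure KTV (A : Type*) where
  I : Set (List A)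
  F : Set (List A)
  T : Set (List A)
  C : Set (List A)

variable {A : Type*}

/-- `Z` is a genuine `k`-test vector. -/
def IsKTV (k : ℕ) (Z : KTV A) : Prop :=
  Z.I ⊆ {w : List A | w.length = k - 1} ∧
  Z.F ⊆ {w : List A | w.length = k - 1} ∧
  Z.T ⊆ {w : List A | w.length = k} ∧
  Z.C ⊆ {w : List A | w.length < k} ∧
  Z.I ∩ Z.F = Z.C ∩ {w : List A | w.length = k - 1}

/-- The componentwise order `⊑` on `k`-test vectors. -/
def ktvLE (Z Z' : KTV A) : Prop :=
  Z.I ⊆ Z'.I ∧ Z.F ⊆ Z'.F ∧ Z.T ⊆ Z'.T ∧ Z.C ⊆ Z'.C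

/-- The union `Z ⊔ Z'` of `k`-test vectors. -/
def ktvUnion (Z Z' : KTV A) : KTV A :=
  ⟨Z.I ∪ Z'.I, Z.F ∪ Z'.F, Z.T ∪ Z'.T,
   Z.C ∪ Z'.C ∪ (Z.I ∩ Z'.F) ∪ (Z'.I ∩ Z.F)⟩

/-- The intersection `Z ⊓ Z'` of `k`-test vectors. -/
def ktvInter (Z Z' : KTV A) : KTV A :=
  ⟨Z.I ∩ Z'.I, Z.F ∩ Z'.F, Z.T ∩ Z'.T, Z.C ∩ Z'.C⟩

/-- The symmetric difference `Z △ Z'` of `k`-test vectors. -/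
def ktvSymmDiff (Z Z' : KTV A) : KTV A :=
  ⟨Z.I ∆ Z'.I, Z.F ∆ Z'.F, Z.T ∆ Z'.T,
   Z.C ∆ Z'.C ∆ (Z'.I ∩ Z.F) ∆ (Z.I ∩ Z'.F)⟩

/-- The least `k`-test vector `⊥ = ⟨∅,∅,∅,∅⟩`. -/
def ktvBot (A : Type*) : KTV A := ⟨∅, ∅, ∅, ∅⟩

/-- The greatest `k`-test vector `⊤ = ⟨Σ^{k-1}, Σ^{k-1}, Σ^k, Σ^{<k}⟩`. -/
def ktvTop (A : Type*) (k : ℕ) : KTV A :=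
  ⟨{w | w.length = k - 1}, {w | w.length = k - 1},
   {w | w.length = k}, {w | w.length < k}⟩

/-- `I_k(L)`: length-`(k-1)` prefixes of words of `L`. -/
def Ik (k : ℕ) (L : Set (List A)) : Set (List A) :=
  {u | u.length = k - 1 ∧ ∃ v, u ++ v ∈ L}

/-- `F_k(L)`: length-`(k-1)` suffixes of words of `L`. -/
def Fk (k : ℕ) (L : Set (List A)) : Set (List A) :=
  {w | w.length = k - 1 ∧ ∃ v, v ++ w ∈ L}

/-- `T_k(L)`: length-`k` substrings of words of `L`. -/
def Tk (k : ℕ) (L : Set (List A)) : Set (List A) :=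
  {v | v.length = k ∧ ∃ u w, u ++ v ++ w ∈ L}

/-- `C_k(L) = (L ∩ Σ^{<k-1}) ∪ (I_k(L) ∩ F_k(L))`. -/
def Ck (k : ℕ) (L : Set (List A)) : Set (List A) :=
  (L ∩ {w | w.length < k - 1}) ∪ (Ik k L ∩ Fk k L)

/-- `α_k(L) = ⟨I_k(L), F_k(L), T_k(L), C_k(L)⟩`. -/
def alphaK (k : ℕ) (L : Set (List A)) : KTV A :=
  ⟨Ik k L, Fk k L, Tk k L, Ck k L⟩

/-- `γ_k(Z) = C ∪ ((IΣ* ∩ Σ*F) \ (Σ*(Σ^k \ T)Σ*))`. -/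
def gammaK (k : ℕ) (Z : KTV A) : Set (List A) :=
  Z.C ∪ (({w | ∃ u ∈ Z.I, u <+: w} ∩ {w | ∃ u ∈ Z.F, u <:+ w}) \
    {w | ∃ v, v.length = k ∧ v ∉ Z.T ∧ v <:+: w})

/-- `L` is `k`-testable in the strict sense. -/
def IsKTSS (k : ℕ) (L : Set (List A)) : Prop :=
  ∃ Z : KTV A, IsKTV k Z ∧ gammaK k Z = L

/-- The cardinality `|Z| = |I| + |F| + |T| + |C ∩ Σ^{<k-1}|` of a `k`-test vector. -/
noncomputable def ktvCard (k : ℕ) (Z : KTV A) : ℕ :=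
  Z.I.ncard + Z.F.ncard + Z.T.ncard + (Z.C ∩ {w : List A | w.length < k - 1}).ncard


lemma gamma_mono {k : ℕ} {Z Z' : KTV A} (h : ktvLE Z Z') :
    gammaK k Z ⊆ gammaK k Z' := by
  obtain ⟨hI, hF, hT, hC⟩ := h
  intro x hx
  rcases hx with hx | ⟨⟨⟨u, hu, hup⟩, ⟨v, hv, hvs⟩⟩, hns⟩
  · exact Or.inl (hC hx)
  · refine Or.inr ⟨⟨⟨u, hI hu, hup⟩, ⟨v, hF hv, hvs⟩⟩, ?_⟩
    rintro ⟨t, ht, htT, hti⟩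
    exact hns ⟨t, ht, fun h => htT (hT h), hti⟩

lemma alpha_le {k : ℕ} (hk : 0 < k) {Z : KTV A} (hZ : IsKTV k Z) {x : List A}
    (hx : x ∈ gammaK k Z) : ktvLE (alphaK k {x}) Z := by
  obtain ⟨hZI, hZF, hZT, hZC, hZIF⟩ := hZ
  have hI : Ik k {x} ⊆ Z.I := by
    rintro u ⟨hul, v, hv⟩
    have hxe : u ++ v = x := hv
    rcases hx with hxc | ⟨⟨⟨u', hu', hup'⟩, -⟩, -⟩
    · have hlt : x.length < k := hZC hxc
      have hlen : u.length + v.length = x.length := by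
        rw [← hxe, List.length_append]
      have hveq : v = [] := List.eq_nil_of_length_eq_zero (by omega)
      have hux : u = x := by rw [← hxe, hveq, List.append_nil]
      have hxIF : x ∈ Z.I ∩ Z.F := by
        rw [hZIF]
        exact ⟨hxc, by simpa [hux] using hul⟩
      exact hux ▸ hxIF.1
    · have hl1 : u'.length = k - 1 := hZI hu'
      have heq : u' = u :=
        List.IsPrefix.eq_of_length
          (List.prefix_of_prefix_length_le hup' ⟨v, hxe⟩ (by omega))
          (by omega)
      exact heq ▸ hu'
  have hF : Fk k {x} ⊆ Z.F := by
    rintro u ⟨hul, v, hv⟩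
    have hxe : v ++ u = x := hv
    rcases hx with hxc | ⟨⟨-, ⟨u', hu', hus'⟩⟩, -⟩
    · have hlt : x.length < k := hZC hxc
      have hlen : v.length + u.length = x.length := by
        rw [← hxe, List.length_append]
      have hveq : v = [] := List.eq_nil_of_length_eq_zero (by omega)
      have hux : u = x := by rw [← hxe, hveq, List.nil_append]
      have hxIF : x ∈ Z.I ∩ Z.F := by
        rw [hZIF]
        exact ⟨hxc, by simpa [hux] using hul⟩
      exact hux ▸ hxIF.2
    · have hl1 : u'.length = k - 1 := hZF hu'
      have heq : u' = u :=
        List.IsSuffix.eq_of_length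
          (List.suffix_of_suffix_length_le hus' ⟨v, hxe⟩ (by omega))
          (by omega)
      exact heq ▸ hu'
  have hT : Tk k {x} ⊆ Z.T := by
    rintro v ⟨hvl, u, t, hutv⟩
    have hxe : u ++ v ++ t = x := hutv
    rcases hx with hxc | ⟨-, hns⟩
    · have hlt : x.length < k := hZC hxc
      have hlen : u.length + (v.length + t.length) = x.length := by
        rw [← hxe]; simp [List.length_append]
      omega
    · by_contra hvT
      exact hns ⟨v, hvl, hvT, u, t, hxe⟩
  refine ⟨hI, hF, hT, ?_⟩
  rintro c (⟨hc, hcl⟩ | ⟨hcI, hcF⟩)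
  · have hcx : c = x := hc
    subst hcx
    rcases hx with hxc | ⟨⟨⟨u', hu', hup'⟩, -⟩, -⟩
    · exact hxc
    · have hl1 : u'.length = k - 1 := hZI hu'
      have := hup'.length_le
      simp only [Set.mem_setOf_eq] at hcl
      omega
  · have : c ∈ Z.I ∩ Z.F := ⟨hI hcI, hF hcF⟩
    rw [hZIF] at this
    exact this.1

lemma self_mem_gamma_alpha {k : ℕ} (hk : 0 < k) (x : List A) :
    x ∈ gammaK k (alphaK k {x}) := by
  rcases lt_or_ge x.length (k - 1) with h | h
  · exact Or.inl (Or.inl ⟨rfl, h⟩)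
  · refine Or.inr ⟨⟨⟨x.take (k - 1), ⟨?_, x.drop (k - 1), ?_⟩, List.take_prefix _ _⟩,
      ⟨x.drop (x.length - (k - 1)), ⟨?_, x.take (x.length - (k - 1)), ?_⟩,
        List.drop_suffix _ _⟩⟩, ?_⟩
    · simp only [List.length_take]; omega
    · simp [List.take_append_drop]
    · simp only [List.length_drop]; omega
    · simp [List.take_append_drop]
    · rintro ⟨v, hvl, hvT, s, t, hst⟩
      exact hvT ⟨hvl, s, t, hst⟩

/-- any finite union of `k`-TSS languages is identified in the
limit from positive examples, via `K_i = ⋃_{j≤i} γ_k(α_k({w_j}))`. -/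
theorem stmt12 {A : Type*} [Fintype A] (k : ℕ) (hk : 0 < k)
    (l : ℕ) (Ls : Fin l → Set (List A)) (hLs : ∀ p, IsKTSS k (Ls p))
    (L : Set (List A)) (hL : L = ⋃ p, Ls p)
    (w : ℕ → List A) (hmem : ∀ i, w i ∈ L) (hsurj : ∀ x ∈ L, ∃ i, w i = x) :
    (∀ i : ℕ, (⋃ j < i, gammaK k (alphaK k {w j})) ⊆ L) ∧
    ∃ n : ℕ, ∀ m ≥ n, (⋃ j < m, gammaK k (alphaK k {w j})) = L := by
  classical
  set f : ℕ → Set (List A) := fun j => gammaK k (alphaK k {w j}) with hf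
  have hsub : ∀ j, f j ⊆ L := by
    intro j
    have hwj := hmem j
    rw [hL] at hwj
    obtain ⟨p, hp⟩ := Set.mem_iUnion.mp hwj
    obtain ⟨Z, hZ, hZL⟩ := hLs p
    have h1 : f j ⊆ Ls p := by
      rw [← hZL]
      exact gamma_mono (alpha_le hk hZ (by rw [hZL]; exact hp))
    exact h1.trans (by rw [hL]; exact Set.subset_iUnion _ p)
  have hfin : (Set.range f).Finite := by
    have h1 : (Set.range fun j =>
        (Ik k {w j}, Fk k {w j}, Tk k {w j}, Ck k {w j})).Finite := by
      apply Set.Finite.subset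
        (((List.finite_length_eq A (k - 1)).finite_subsets.prod
          (((List.finite_length_eq A (k - 1)).finite_subsets.prod
            (((List.finite_length_eq A k).finite_subsets.prod
              ((List.finite_length_lt A k).finite_subsets)))))))
      rintro _ ⟨j, rfl⟩
      refine ⟨fun u hu => hu.1, fun u hu => hu.1, fun u hu => hu.1, ?_⟩
      rintro c (⟨-, hc⟩ | ⟨⟨hc, -⟩, -⟩) <;>
        simp only [Set.mem_setOf_eq] at hc ⊢ <;> omega
    have h2 : Set.range f ⊆
        (fun p : Set (List A) × Set (List A) × Set (List A) × Set (List A) =>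
          gammaK k ⟨p.1, p.2.1, p.2.2.1, p.2.2.2⟩) ''
          (Set.range fun j => (Ik k {w j}, Fk k {w j}, Tk k {w j}, Ck k {w j})) := by
      rintro _ ⟨j, rfl⟩
      exact ⟨_, ⟨j, rfl⟩, rfl⟩
    exact (h1.image _).subset h2
  set c : Set (List A) → ℕ := fun s => if h : s ∈ Set.range f then h.choose else 0 with hc
  have hcspec : ∀ j, f (c (f j)) = f j := by
    intro j
    have h : f j ∈ Set.range f := ⟨j, rfl⟩
    simp only [hc, dif_pos h]
    exact h.choose_spec
  refine ⟨fun i => Set.iUnion₂_subset fun j _ => hsub j,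
    hfin.toFinset.sup fun s => c s + 1, fun m hm => ?_⟩
  apply Set.Subset.antisymm
  · exact Set.iUnion₂_subset fun j _ => hsub j
  · intro x hx
    obtain ⟨j, rfl⟩ := hsurj x hx
    have hjm : c (f j) < m := by
      have h1 : f j ∈ hfin.toFinset := hfin.mem_toFinset.mpr ⟨j, rfl⟩
      have h2 : c (f j) + 1 ≤ hfin.toFinset.sup fun s => c s + 1 :=
        Finset.le_sup (f := fun s => c s + 1) h1
      omega
    refine Set.mem_iUnion₂.mpr ⟨c (f j), hjm, ?_⟩
    show w j ∈ f (c (f j))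
    rw [hcspec j]
    exact self_mem_gamma_alpha hk (w j)
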